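/- Assume hypothesis (H1) with some ρ > 0. Let A₀ be the generator of dilations, A₀u = −i( x·∇u + (d/2) u ). Then there exist smooth functions a_{jk} (1≤j,k≤d) on ℝ^d with ∂_x^α a_{jk} = O(⟨x⟩^{−ρ−|α|}) for every multi-index α, and smooth functions b_j, c_j with ∂_x^α b_j = O(⟨x⟩^{−ρ−1−|α|}) and ∂_x^α c_j = O(⟨x⟩^{−ρ−1−|α|}), such that for every Schwartz function u on ℝ^d, P(A₀u) − A₀(Pu) = −2i ( Pu + ∑_{j,k} ∂̃_j^*( a_{jk} ∂̃_k u ) + ∑_j ∂̃_j^*( b_j u ) + ∑_j c_j ∂̃_j u ). -/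

import Mathlib

open MeasureTheory Real Filter

noncomputable section

namespace Paper

def nsq {d : ℕ} (x : Fin d → ℝ) : ℝ := ∑ j, (x j) ^ 2

def jb {d : ℕ} (x : Fin d → ℝ) : ℝ := (1 + nsq x) ^ ((1 : ℝ) / 2)

def br (y : ℝ) : ℝ := (1 + y ^ 2) ^ ((1 : ℝ) / 2)

def pd {d : ℕ} {F : Type*} [NormedAddCommGroup F] [NormedSpace ℝ F]
    (j : Fin d) (f : (Fin d → ℝ) → F) : (Fin d → ℝ) → F :=
  fun x => fderiv ℝ f x (Pi.single j 1)

def pds {d : ℕ} {F : Type*} [NormedAddCommGroup F] [NormedSpace ℝ F]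
    (α : List (Fin d)) (f : (Fin d → ℝ) → F) : (Fin d → ℝ) → F :=
  List.foldr (fun j h => pd j h) f α

structure MetricH1 (d : ℕ) (ρ : ℝ) where
  g : Fin d → Fin d → (Fin d → ℝ) → ℝ
  smooth : ∀ i j, ContDiff ℝ (⊤ : ℕ∞) (g i j)
  symm : ∀ i j x, g i j x = g j i x
  posdef : ∀ x, (Matrix.of fun i j => g i j x).PosDef
  decay : ∀ (α : List (Fin d)) (i j : Fin d), ∃ C > 0, ∀ x,
    |pds α (fun y => g i j y - if i = j then 1 else 0) x|
      ≤ C * jb x ^ (-(α.length : ℝ) - ρ)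

namespace MetricH1
variable {d : ℕ} {ρ : ℝ}

def ginv (M : MetricH1 d ρ) (x : Fin d → ℝ) : Matrix (Fin d) (Fin d) ℝ :=
  (Matrix.of fun i j => M.g i j x)⁻¹

def gd (M : MetricH1 d ρ) (x : Fin d → ℝ) : ℝ :=
  (Matrix.of fun i j => M.g i j x).det ^ ((1 : ℝ) / 4)

end MetricH1

variable {d : ℕ} {ρ : ℝ} {F : Type*} [NormedAddCommGroup F] [NormedSpace ℝ F]

def dtil (M : MetricH1 d ρ) (j : Fin d) (u : (Fin d → ℝ) → F) : (Fin d → ℝ) → F :=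
  pd j fun y => (M.gd y)⁻¹ • u y

def dtilStar (M : MetricH1 d ρ) (j : Fin d) (v : (Fin d → ℝ) → F) : (Fin d → ℝ) → F :=
  fun x => -((M.gd x)⁻¹ • pd j v x)

def Pop (M : MetricH1 d ρ) (u : (Fin d → ℝ) → F) : (Fin d → ℝ) → F :=
  fun x => -(∑ i, ∑ j,
    (M.gd x)⁻¹ • pd i (fun y => (M.ginv y i j * (M.gd y) ^ 2) • dtil M j u y) x)

def rotTil (M : MetricH1 d ρ) (k l : Fin d) (u : (Fin d → ℝ) → F) : (Fin d → ℝ) → F :=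
  fun x => x k • dtil M l u x - x l • dtil M k u x

def p0 (M : MetricH1 d ρ) (x ξ : Fin d → ℝ) : ℝ := ∑ i, ∑ j, M.ginv x i j * ξ i * ξ j

def NonTrapping (M : MetricH1 d ρ) : Prop :=
  ∀ X Ξ : ℝ → Fin d → ℝ,
    (∀ (i : Fin d) (t : ℝ),
      HasDerivAt (fun s => X s i) (2 * ∑ j, M.ginv (X t) i j * Ξ t j) t) →
    (∀ (i : Fin d) (t : ℝ),
      HasDerivAt (fun s => Ξ s i)
        (-(∑ j, ∑ k, pd i (fun y => M.ginv y j k) (X t) * Ξ t j * Ξ t k)) t) →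
    p0 M (X 0) (Ξ 0) = 1 →
    Tendsto (fun t => nsq (X t)) atTop atTop ∧ Tendsto (fun t => nsq (X t)) atBot atTop

def L2 {d : ℕ} {F : Type*} [NormedAddCommGroup F] (f : (Fin d → ℝ) → F) : ℝ :=
  (∫ x, ‖f x‖ ^ 2) ^ ((1 : ℝ) / 2)

def L2T {d : ℕ} {F : Type*} [NormedAddCommGroup F] (T : ℝ) (f : ℝ → (Fin d → ℝ) → F) : ℝ :=
  (∫ t in Set.Icc (0:ℝ) T, ∫ x, ‖f t x‖ ^ 2) ^ ((1 : ℝ) / 2)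

def Ffun (μ ε T : ℝ) : ℝ := if μ ≤ 1/2 then T ^ (1 - 2*μ + 2*ε) else 1

def prime (M : MetricH1 d ρ) (u : ℝ → (Fin d → ℝ) → F) :
    Fin (d+1) → ℝ → (Fin d → ℝ) → F :=
  Fin.cons (fun t x => deriv (fun s => u s x) t) (fun j t x => dtil M j (u t) x)

def Box (M : MetricH1 d ρ) (u : ℝ → (Fin d → ℝ) → F) : ℝ → (Fin d → ℝ) → F :=
  fun t x => deriv (fun τ => deriv (fun σ => u σ x) τ) t + Pop M (u t) x

end Paper

namespace Paper

variable {d : ℕ} {ρ : ℝ}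

/-- The generator of dilations `A₀ u = -i (x·∇u + (d/2) u)`. -/
def A0 (d : ℕ) (u : (Fin d → ℝ) → ℂ) : (Fin d → ℝ) → ℂ :=
  fun x => -Complex.I * ((∑ j, (x j : ℂ) * pd j u x) + ((d : ℂ) / 2) * u x)

/-- A smooth real function all whose derivatives of order `|α|` decay
like `⟨x⟩^{-ρ-m-|α|}`. -/
def RDecay (ρ : ℝ) (m : ℕ) (f : (Fin d → ℝ) → ℝ) : Prop :=
  ContDiff ℝ (⊤ : ℕ∞) f ∧
    ∀ α : List (Fin d), ∃ C, ∀ x,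
      |pds α f x| ≤ C * jb x ^ (-ρ - (m : ℝ) - (α.length : ℝ))

end Paper

namespace Paper

variable {d : ℕ} {F : Type*} [NormedAddCommGroup F] [NormedSpace ℝ F]

/-- smooth -/
abbrev Sm (f : (Fin d → ℝ) → F) : Prop := ContDiff ℝ (⊤ : ℕ∞) f

lemma Sm.diff {f : (Fin d → ℝ) → F} (hf : Sm f) : Differentiable ℝ f :=
  hf.differentiable (by simp)

lemma Sm.pd {f : (Fin d → ℝ) → F} (hf : Sm f) (j : Fin d) : Sm (pd j f) := by
  have h1 : ContDiff ℝ (⊤ : ℕ∞) (fderiv ℝ f) := hf.fderiv_right (by exact_mod_cast le_refl _)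
  exact h1.clm_apply contDiff_const

lemma pds_nil (f : (Fin d → ℝ) → F) : pds ([] : List (Fin d)) f = f := rfl

lemma pds_cons (j : Fin d) (α : List (Fin d)) (f : (Fin d → ℝ) → F) :
    pds (j :: α) f = pd j (pds α f) := rfl

lemma pds_append_single (α : List (Fin d)) (j : Fin d) (f : (Fin d → ℝ) → F) :
    pds (α ++ [j]) f = pds α (pd j f) := by
  unfold pds; rw [List.foldr_append]; rfl

lemma Sm.pds {f : (Fin d → ℝ) → F} (hf : Sm f) (α : List (Fin d)) : Sm (pds α f) := by
  induction α with
  | nil => exact hf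
  | cons j β ih => exact ih.pd j

lemma pd_add {f g : (Fin d → ℝ) → F} (hf : Differentiable ℝ f) (hg : Differentiable ℝ g) :
    pd (d := d) j (fun x => f x + g x) = fun x => pd j f x + pd j g x := by
  funext x
  simp only [pd, fderiv_fun_add (hf x) (hg x)]
  rfl

lemma pds_add {f g : (Fin d → ℝ) → F} (hf : Sm f) (hg : Sm g) (α : List (Fin d)) :
    pds α (fun x => f x + g x) = fun x => pds α f x + pds α g x := by
  induction α with
  | nil => rfl
  | cons j β ih =>
      rw [pds_cons, ih, pd_add ((hf.pds β).diff)
        ((hg.pds β).diff), pds_cons, pds_cons]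

lemma pd_neg {f : (Fin d → ℝ) → F} :
    pd (d := d) j (fun x => -(f x)) = fun x => -(pd j f x) := by
  funext x; simp only [pd, fderiv_fun_neg]; rfl

lemma pds_neg {f : (Fin d → ℝ) → F} (α : List (Fin d)) :
    pds α (fun x => -(f x)) = fun x => -(pds α f x) := by
  induction α with
  | nil => rfl
  | cons j β ih => rw [pds_cons, ih, pd_neg, pds_cons]

lemma pd_smul {f : (Fin d → ℝ) → ℝ} {v : (Fin d → ℝ) → F} {x : Fin d → ℝ}
    (hf : DifferentiableAt ℝ f x) (hv : DifferentiableAt ℝ v x) (j : Fin d) :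
    pd j (fun y => f y • v y) x = pd j f x • v x + f x • pd j v x := by
  simp only [pd, fderiv_fun_smul hf hv]
  simp [add_comm]

lemma pd_mul {f g : (Fin d → ℝ) → ℝ} {x : Fin d → ℝ}
    (hf : DifferentiableAt ℝ f x) (hg : DifferentiableAt ℝ g x) (j : Fin d) :
    pd j (fun y => f y * g y) x = pd j f x * g x + f x * pd j g x := by
  simp only [pd, fderiv_fun_mul hf hg]
  simp [mul_comm, add_comm]

lemma pd_const_smul {R : Type*} [Semiring R] [Module R F] [SMulCommClass ℝ R F]
    [ContinuousConstSMul R F] {v : (Fin d → ℝ) → F} (hv : Differentiable ℝ v) (c : R) (j : Fin d) :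
    pd (d := d) j (fun y => c • v y) = fun x => c • pd j v x := by
  funext x; simp only [pd, fderiv_fun_const_smul (hv x) c]; rfl

lemma pd_const (c : F) (j : Fin d) : pd (d := d) j (fun _ => c) = fun _ => 0 := by
  funext x; simp [pd]

lemma pd_coord (j k : Fin d) : pd (d := d) j (fun x => x k) = fun _ => if k = j then 1 else 0 := by
  funext x
  have : (fun x : Fin d → ℝ => x k) = fun x => (ContinuousLinearMap.proj (R := ℝ) (φ := fun _ : Fin d => ℝ) k) x := rfl
  rw [pd, this, ContinuousLinearMap.fderiv]
  simp [Pi.single_apply]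

lemma pd_sum {ι : Type*} (s : Finset ι) (f : ι → (Fin d → ℝ) → F)
    (hf : ∀ i ∈ s, Differentiable ℝ (f i)) (j : Fin d) :
    pd (d := d) j (fun x => ∑ i ∈ s, f i x) = fun x => ∑ i ∈ s, pd j (f i) x := by
  funext x
  simp only [pd]
  rw [fderiv_fun_sum (fun i hi => (hf i hi) x)]
  simp

/-- symmetry of second partial derivatives for smooth functions -/
lemma pd_comm {v : (Fin d → ℝ) → F} (hv : Sm v) (i j : Fin d) :
    pd i (pd j v) = pd j (pd i v) := by
  funext x
  have hdv : Differentiable ℝ v := hv.diff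
  have hfd : ContDiff ℝ (⊤ : ℕ∞) (fderiv ℝ v) := hv.fderiv_right (by exact_mod_cast le_refl _)
  have hsymm := second_derivative_symmetric (f := v) (f' := fderiv ℝ v)
    (f'' := fderiv ℝ (fderiv ℝ v) x) (fun y => (hdv y).hasFDerivAt)
    (((Sm.diff hfd) x).hasFDerivAt) (Pi.single i 1) (Pi.single j 1)
  have expand : ∀ a b : Fin d,
      pd a (pd b v) x = fderiv ℝ (fderiv ℝ v) x (Pi.single a 1) (Pi.single b 1) := by
    intro a b
    have : pd b v = fun y => (fderiv ℝ v y) (Pi.single b 1) := rfl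
    rw [pd, this, fderiv_clm_apply ((Sm.diff hfd) x) (differentiableAt_const _)]
    simp
  rw [expand i j, expand j i, hsymm]

end Paper
namespace Paper

variable {d : ℕ}

lemma nsq_nonneg (x : Fin d → ℝ) : 0 ≤ nsq x := Finset.sum_nonneg fun _ _ => sq_nonneg _

lemma one_le_jb (x : Fin d → ℝ) : 1 ≤ jb x :=
  Real.one_le_rpow (by linarith [nsq_nonneg x]) (by norm_num)

lemma jb_pos (x : Fin d → ℝ) : 0 < jb x := lt_of_lt_of_le one_pos (one_le_jb x)

lemma jb_rpow_pos (x : Fin d → ℝ) (s : ℝ) : 0 < jb x ^ s := Real.rpow_pos_of_pos (jb_pos x) s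

lemma jb_rpow_mono (x : Fin d → ℝ) {s t : ℝ} (h : s ≤ t) : jb x ^ s ≤ jb x ^ t :=
  Real.rpow_le_rpow_of_exponent_le (one_le_jb x) h

lemma abs_coord_le_jb (x : Fin d → ℝ) (k : Fin d) : |x k| ≤ jb x := by
  have h1 : |x k| = Real.sqrt ((x k) ^ 2) := (Real.sqrt_sq_eq_abs _).symm
  have h2 : jb x = Real.sqrt (1 + nsq x) := by
    rw [jb, Real.sqrt_eq_rpow]
  rw [h1, h2]
  apply Real.sqrt_le_sqrt
  have : (x k) ^ 2 ≤ nsq x := Finset.single_le_sum (fun i _ => sq_nonneg (x i)) (Finset.mem_univ k)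
  linarith

/-- decay class: all derivatives of order `k` bounded by `C ⟨x⟩^(s-k)` -/
def Dcy (s : ℝ) (f : (Fin d → ℝ) → ℝ) : Prop :=
  ∀ α : List (Fin d), ∃ C, ∀ x, |pds α f x| ≤ C * jb x ^ (s - α.length)

def DcyT (n : ℕ) (s : ℝ) (f : (Fin d → ℝ) → ℝ) : Prop :=
  ∀ α : List (Fin d), α.length ≤ n → ∃ C, ∀ x, |pds α f x| ≤ C * jb x ^ (s - α.length)

lemma bound_mono {F : (Fin d → ℝ) → ℝ} {C e e' : ℝ} (h : ∀ x, |F x| ≤ C * jb x ^ e)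
    (he : e ≤ e') : ∃ C', ∀ x, |F x| ≤ C' * jb x ^ e' := by
  refine ⟨max C 0, fun x => (h x).trans ?_⟩
  calc C * jb x ^ e ≤ max C 0 * jb x ^ e := by
        apply mul_le_mul_of_nonneg_right (le_max_left _ _) (jb_rpow_pos x e).le
    _ ≤ max C 0 * jb x ^ e' := by
        apply mul_le_mul_of_nonneg_left (jb_rpow_mono x he) (le_max_right _ _)

lemma Dcy.dcyT {s f} (h : Dcy (d := d) s f) (n : ℕ) : DcyT n s f := fun α _ => h α

lemma dcyT_dcy {s f} (h : ∀ n, DcyT (d := d) n s f) : Dcy s f := fun α => h α.length α le_rfl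

lemma Dcy.mono {s t : ℝ} {f} (h : Dcy (d := d) s f) (hst : s ≤ t) : Dcy t f := by
  intro α
  obtain ⟨C, hC⟩ := h α
  exact bound_mono hC (by linarith)

lemma Dcy.add {s : ℝ} {f g} (hf : Dcy (d := d) s f) (hg : Dcy s g) (hsf : Sm f) (hsg : Sm g) :
    Dcy s (fun x => f x + g x) := by
  intro α
  obtain ⟨C, hC⟩ := hf α; obtain ⟨C', hC'⟩ := hg α
  refine ⟨C + C', fun x => ?_⟩
  rw [pds_add hsf hsg]
  calc |pds α f x + pds α g x| ≤ |pds α f x| + |pds α g x| := abs_add_le _ _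
    _ ≤ C * jb x ^ (s - α.length) + C' * jb x ^ (s - α.length) := add_le_add (hC x) (hC' x)
    _ = (C + C') * jb x ^ (s - α.length) := by ring

lemma Dcy.neg {s : ℝ} {f} (hf : Dcy (d := d) s f) : Dcy s (fun x => -(f x)) := by
  intro α
  obtain ⟨C, hC⟩ := hf α
  refine ⟨C, fun x => ?_⟩
  rw [pds_neg]
  simpa using hC x

lemma pds_const_aux (α : List (Fin d)) (c : ℝ) :
    ∃ c', (pds α (fun _ => c) = fun _ => c') ∧ (α ≠ [] → c' = 0) := by
  induction α with
  | nil => exact ⟨c, rfl, fun h => absurd rfl h⟩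
  | cons j β ih =>
      obtain ⟨c', hc', _⟩ := ih
      refine ⟨0, ?_, fun _ => rfl⟩
      rw [pds_cons, hc', pd_const]

lemma dcy_const (c : ℝ) : Dcy (d := d) 0 (fun _ => c) := by
  intro α
  obtain ⟨c', hc', hz⟩ := pds_const_aux α c
  refine ⟨|c'|, fun x => ?_⟩
  rw [hc']
  rcases List.eq_nil_or_concat α with rfl | ⟨β, j, rfl⟩
  · simp [Real.rpow_zero]
  · rw [hz (by simp)]
    simp

lemma Dcy.pdj {s : ℝ} {f} (hf : Dcy (d := d) s f) (j : Fin d) : Dcy (s - 1) (pd j f) := by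
  intro α
  obtain ⟨C, hC⟩ := hf (α ++ [j])
  refine ⟨C, fun x => ?_⟩
  rw [← pds_append_single]
  have := hC x
  rwa [List.length_append, List.length_singleton, show (s - (α.length + 1 : ℕ) : ℝ)
    = s - 1 - α.length by push_cast; ring] at this

lemma DcyT.pdj {n : ℕ} {s : ℝ} {f} (hf : DcyT (d := d) (n + 1) s f) (j : Fin d) :
    DcyT n (s - 1) (pd j f) := by
  intro α hα
  obtain ⟨C, hC⟩ := hf (α ++ [j]) (by simp; omega)
  refine ⟨C, fun x => ?_⟩
  rw [← pds_append_single]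
  have := hC x
  rwa [List.length_append, List.length_singleton, show (s - (α.length + 1 : ℕ) : ℝ)
    = s - 1 - α.length by push_cast; ring] at this

lemma DcyT.mono_n {n m : ℕ} {s : ℝ} {f} (hf : DcyT (d := d) n s f) (h : m ≤ n) : DcyT m s f :=
  fun α hα => hf α (hα.trans h)

/-- truncated Leibniz estimate -/
lemma dcyT_mul (α : List (Fin d)) :
    ∀ (n : ℕ), α.length ≤ n → ∀ (s t : ℝ) (f g : (Fin d → ℝ) → ℝ), Sm f → Sm g →
      DcyT n s f → DcyT n t g →
      ∃ C, ∀ x, |pds α (fun y => f y * g y) x| ≤ C * jb x ^ (s + t - α.length) := by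
  induction α using List.reverseRecOn with
  | nil =>
      intro n _ s t f g _ _ hf hg
      obtain ⟨C, hC⟩ := hf [] (by simp)
      obtain ⟨C', hC'⟩ := hg [] (by simp)
      refine ⟨C * C', fun x => ?_⟩
      simp only [pds_nil, List.length_nil, Nat.cast_zero, sub_zero] at *
      calc |f x * g x| = |f x| * |g x| := abs_mul _ _
        _ ≤ (C * jb x ^ s) * (C' * jb x ^ t) :=
            mul_le_mul (hC x) (hC' x) (abs_nonneg _) ((abs_nonneg _).trans (hC x))
        _ = (C * C') * (jb x ^ s * jb x ^ t) := by ring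
        _ = (C * C') * jb x ^ (s + t) := by rw [← Real.rpow_add (jb_pos x)]
  | append_singleton β j ih =>
      intro n hn s t f g hsf hsg hf hg
      have hn' : 1 ≤ n := le_trans (by simp) hn
      obtain ⟨m, rfl⟩ : ∃ m, n = m + 1 := ⟨n - 1, by omega⟩
      have hβ : β.length ≤ m := by simp at hn; omega
      have key : pds (β ++ [j]) (fun y => f y * g y)
          = fun x => pds β (fun y => pd j f y * g y) x + pds β (fun y => f y * pd j g y) x := by
        rw [pds_append_single]
        have h1 : Paper.pd j (fun y => f y * g y)
            = fun y => pd j f y * g y + f y * pd j g y :=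
          funext fun y => pd_mul (hsf.diff y) (hsg.diff y) j
        rw [h1]
        exact pds_add ((hsf.pd j).mul hsg) (hsf.mul (hsg.pd j)) β
      obtain ⟨C1, hC1⟩ := ih m hβ (s - 1) t (pd j f) g (hsf.pd j) hsg
        (hf.pdj j) (hg.mono_n (by omega))
      obtain ⟨C2, hC2⟩ := ih m hβ s (t - 1) f (pd j g) hsf (hsg.pd j)
        (hf.mono_n (by omega)) (hg.pdj j)
      refine ⟨C1 + C2, fun x => ?_⟩
      rw [key]
      have e1 : (s - 1 + t - β.length : ℝ) = s + t - (β ++ [j]).length := by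
        simp [List.length_append]; push_cast; ring
      have e2 : (s + (t - 1) - β.length : ℝ) = s + t - (β ++ [j]).length := by
        simp [List.length_append]; push_cast; ring
      calc |pds β (fun y => pd j f y * g y) x + pds β (fun y => f y * pd j g y) x|
          ≤ |pds β (fun y => pd j f y * g y) x| + |pds β (fun y => f y * pd j g y) x| :=
            abs_add_le _ _
        _ ≤ C1 * jb x ^ (s - 1 + t - β.length) + C2 * jb x ^ (s + (t - 1) - β.length) :=
            add_le_add (hC1 x) (hC2 x)
        _ = (C1 + C2) * jb x ^ (s + t - (β ++ [j]).length) := by rw [e1, e2]; ring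

lemma DcyT.mul {n : ℕ} {s t : ℝ} {f g} (hsf : Sm f) (hsg : Sm g)
    (hf : DcyT (d:=d) n s f) (hg : DcyT n t g) : DcyT n (s + t) (fun y => f y * g y) := by
  intro α hα
  obtain ⟨C, hC⟩ := dcyT_mul α n hα s t f g hsf hsg hf hg
  exact ⟨C, hC⟩

lemma Dcy.mul {s t : ℝ} {f g} (hsf : Sm f) (hsg : Sm g)
    (hf : Dcy (d:=d) s f) (hg : Dcy t g) : Dcy (s + t) (fun y => f y * g y) :=
  dcyT_dcy fun n => (hf.dcyT n).mul (s := s) hsf hsg (hg.dcyT n)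

lemma Dcy.const_mul {s : ℝ} {f} (hsf : Sm f) (hf : Dcy (d:=d) s f) (c : ℝ) :
    Dcy s (fun y => c * f y) := by
  have := (dcy_const (d:=d) c).mul (t := s) contDiff_const hsf hf
  simpa using this

lemma dcy_coord (k : Fin d) : Dcy 1 (fun x => x k) := by
  intro α
  induction α using List.reverseRecOn with
  | nil =>
      refine ⟨1, fun x => ?_⟩
      simpa [Real.rpow_one, pds_nil] using abs_coord_le_jb x k
  | append_singleton β j _ =>
      rw [pds_append_single, pd_coord]
      obtain ⟨c', hc', hz⟩ := pds_const_aux β (if k = j then (1:ℝ) else 0)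
      refine ⟨|c'|, fun x => ?_⟩
      rw [hc']
      rcases List.eq_nil_or_concat β with rfl | ⟨γ, i, rfl⟩
      · simp only [List.nil_append, List.length_singleton, Nat.cast_one]
        have : (1 - (1:ℝ)) = 0 := by ring
        rw [this, Real.rpow_zero, mul_one]
      · rw [hz (by simp)]
        simp

end Paper
namespace Paper

variable {d : ℕ}

lemma pd_sub_const {f : (Fin d → ℝ) → ℝ} (j : Fin d) (c : ℝ) :
    pd j (fun x => f x - c) = pd j f := by
  funext x; rw [pd, pd, fderiv_sub_const]

lemma pd_rpow {f : (Fin d → ℝ) → ℝ} (hsf : Sm f) (hpos : ∀ x, 0 < f x) (q : ℝ) (j : Fin d) :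
    pd j (fun x => f x ^ q) = fun x => (q * f x ^ (q - 1)) * pd j f x := by
  funext x
  have h1 : HasDerivAt (fun t : ℝ => t ^ q) (q * f x ^ (q - 1)) (f x) :=
    Real.hasDerivAt_rpow_const (Or.inl (hpos x).ne')
  have h2 : HasFDerivAt f (fderiv ℝ f x) x := (hsf.diff x).hasFDerivAt
  have h3 := h1.comp_hasFDerivAt x h2
  have h4 : fderiv ℝ (fun x => f x ^ q) x = (q * f x ^ (q - 1)) • fderiv ℝ f x := h3.fderiv
  rw [pd, h4]
  simp [pd]

lemma Sm.rpow {f : (Fin d → ℝ) → ℝ} (hsf : Sm f) (hpos : ∀ x, 0 < f x) (q : ℝ) :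
    Sm (fun x => f x ^ q) :=
  contDiff_iff_contDiffAt.mpr fun x => hsf.contDiffAt.rpow_const_of_ne (hpos x).ne'

lemma rpow_bounded {c M : ℝ} (hc : 0 < c) (hM : 0 < M) (q : ℝ) :
    ∃ K, ∀ t : ℝ, c ≤ t → t ≤ M → |t ^ q| ≤ K := by
  refine ⟨Real.exp ((|Real.log c| + |Real.log M|) * |q|), fun t h1 h2 => ?_⟩
  have ht : 0 < t := lt_of_lt_of_le hc h1
  rw [abs_of_pos (Real.rpow_pos_of_pos ht q), Real.rpow_def_of_pos ht]
  apply Real.exp_le_exp.mpr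
  have hl1 : Real.log c ≤ Real.log t := Real.log_le_log hc h1
  have hl2 : Real.log t ≤ Real.log M := Real.log_le_log ht h2
  have habs : |Real.log t| ≤ |Real.log c| + |Real.log M| := by
    rw [abs_le]
    constructor
    · linarith [neg_abs_le (Real.log c), abs_nonneg (Real.log M)]
    · linarith [le_abs_self (Real.log M), abs_nonneg (Real.log c)]
  calc Real.log t * q ≤ |Real.log t * q| := le_abs_self _
    _ = |Real.log t| * |q| := abs_mul _ _
    _ ≤ (|Real.log c| + |Real.log M|) * |q| := mul_le_mul_of_nonneg_right habs (abs_nonneg q)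

lemma rpow_lip {c M : ℝ} (hc : 0 < c) (hcM : c ≤ 1) (h1M : 1 ≤ M) (q : ℝ) :
    ∃ L, 0 ≤ L ∧ ∀ t : ℝ, c ≤ t → t ≤ M → |t ^ q - 1| ≤ L * |t - 1| := by
  obtain ⟨K, hK⟩ := rpow_bounded hc (by linarith : (0:ℝ) < M) (q - 1)
  have hK0 : 0 ≤ K := le_trans (abs_nonneg _) (hK 1 hcM h1M)
  refine ⟨|q| * K, mul_nonneg (abs_nonneg q) hK0, fun t h1 h2 => ?_⟩
  have hconv : Convex ℝ (Set.Icc c M) := convex_Icc _ _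
  have hders : ∀ y ∈ Set.Icc c M,
      HasDerivWithinAt (fun u : ℝ => u ^ q) (q * y ^ (q - 1)) (Set.Icc c M) y := fun y hy =>
    (Real.hasDerivAt_rpow_const (Or.inl (lt_of_lt_of_le hc hy.1).ne')).hasDerivWithinAt
  have hbd : ∀ y ∈ Set.Icc c M, ‖q * y ^ (q - 1)‖ ≤ |q| * K := by
    intro y hy
    rw [Real.norm_eq_abs, abs_mul]
    exact mul_le_mul_of_nonneg_left (hK y hy.1 hy.2) (abs_nonneg q)
  have key := hconv.norm_image_sub_le_of_norm_hasDerivWithin_le hders hbd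
    (Set.mem_Icc.mpr ⟨hcM, h1M⟩) (Set.mem_Icc.mpr ⟨h1, h2⟩)
  simpa [Real.one_rpow, Real.norm_eq_abs] using key

lemma dcy_rpow {f : (Fin d → ℝ) → ℝ} (hsf : Sm f) {c : ℝ} (hc : 0 < c) (hlb : ∀ x, c ≤ f x)
    {s : ℝ} (hs : s ≤ 0) (hdec : Dcy s (fun x => f x - 1)) (q : ℝ) :
    Dcy 0 (fun x => f x ^ q) ∧ Dcy s (fun x => f x ^ q - 1) := by
  have hpos : ∀ x, 0 < f x := fun x => lt_of_lt_of_le hc (hlb x)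
  set c₁ : ℝ := min c 1 with hc₁def
  have hc₁ : 0 < c₁ := lt_min hc one_pos
  have hc₁1 : c₁ ≤ 1 := min_le_right _ _
  have hlb₁ : ∀ x, c₁ ≤ f x := fun x => le_trans (min_le_left _ _) (hlb x)
  obtain ⟨C0, hC0⟩ := hdec []
  set M : ℝ := 1 + max C0 0 with hMdef
  have hM1 : (1:ℝ) ≤ M := by rw [hMdef]; have := le_max_right C0 0; linarith
  have hub : ∀ x, f x ≤ M := by
    intro x
    have h1 := hC0 x
    simp only [pds_nil, List.length_nil, Nat.cast_zero, sub_zero] at h1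
    have h2 : C0 * jb x ^ s ≤ max C0 0 :=
      calc C0 * jb x ^ s ≤ max C0 0 * jb x ^ s :=
            mul_le_mul_of_nonneg_right (le_max_left _ _) (jb_rpow_pos x s).le
        _ ≤ max C0 0 * 1 := mul_le_mul_of_nonneg_left
            (Real.rpow_le_one_of_one_le_of_nonpos (one_le_jb x) hs) (le_max_right _ _)
        _ = max C0 0 := mul_one _
    have h3 : f x - 1 ≤ max C0 0 := le_trans (le_abs_self _) (le_trans h1 h2)
    rw [hMdef]; linarith
  have base : ∀ q' : ℝ, ∃ K, ∀ x, |f x ^ q'| ≤ K := by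
    intro q'
    obtain ⟨K, hK⟩ := rpow_bounded hc₁ (lt_of_lt_of_le one_pos hM1) q'
    exact ⟨K, fun x => hK (f x) (hlb₁ x) (hub x)⟩
  have hfd : ∀ j : Fin d, Dcy (s - 1) (pd j f) := by
    intro j
    have := hdec.pdj j
    rwa [pd_sub_const] at this
  -- truncated main claim
  have main : ∀ n : ℕ, ∀ q' : ℝ, DcyT n 0 (fun x => f x ^ q') := by
    intro n
    induction n with
    | zero =>
        intro q' α hα
        rw [Nat.le_zero, List.length_eq_zero_iff] at hα
        subst hα
        obtain ⟨K, hK⟩ := base q'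
        refine ⟨K, fun x => ?_⟩
        simpa [pds_nil, Real.rpow_zero] using hK x
    | succ m ih =>
        intro q' α hα
        rcases List.eq_nil_or_concat α with rfl | ⟨β, j, rfl⟩
        · obtain ⟨K, hK⟩ := base q'
          refine ⟨K, fun x => ?_⟩
          simpa [pds_nil, Real.rpow_zero] using hK x
        · simp only [List.concat_eq_append] at hα ⊢
          have hβ : β.length ≤ m := by
            rw [List.length_append, List.length_singleton] at hα; omega
          have hF1sm : Sm (fun x => q' * f x ^ (q' - 1)) :=
            contDiff_const.mul (hsf.rpow hpos (q' - 1))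
          have hF1 : DcyT m 0 (fun x => q' * f x ^ (q' - 1)) := by
            have h0 : DcyT m (0 + 0) (fun x => q' * f x ^ (q' - 1)) :=
              DcyT.mul contDiff_const (hsf.rpow hpos (q' - 1))
                (((dcy_const q')).dcyT m) (ih (q' - 1))
            simpa using h0
          have hF2 : DcyT m (s - 1) (pd j f) := (hfd j).dcyT m
          have hprod : DcyT m (0 + (s - 1))
              (fun x => (q' * f x ^ (q' - 1)) * pd j f x) :=
            DcyT.mul hF1sm (hsf.pd j) hF1 hF2
          obtain ⟨C, hC⟩ := hprod β hβ
          have hrw : pds (β ++ [j]) (fun x => f x ^ q')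
              = pds β (fun x => (q' * f x ^ (q' - 1)) * pd j f x) := by
            rw [pds_append_single, pd_rpow hsf hpos]
          obtain ⟨C', hC'⟩ := bound_mono hC
            (show (0 + (s-1) - β.length : ℝ) ≤ 0 - (β ++ [j]).length by
              rw [List.length_append, List.length_singleton]; push_cast; linarith)
          exact ⟨C', fun x => by rw [hrw]; exact hC' x⟩
  constructor
  · exact dcyT_dcy fun n => main n q
  · intro α
    rcases List.eq_nil_or_concat α with rfl | ⟨β, j, rfl⟩
    · obtain ⟨L, hL0, hL⟩ := rpow_lip hc₁ hc₁1 hM1 q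
      refine ⟨L * C0, fun x => ?_⟩
      simp only [pds_nil, List.length_nil, Nat.cast_zero, sub_zero]
      calc |f x ^ q - 1| ≤ L * |f x - 1| := hL (f x) (hlb₁ x) (hub x)
        _ ≤ L * (C0 * jb x ^ s) := by
            apply mul_le_mul_of_nonneg_left _ hL0
            simpa [pds_nil] using hC0 x
        _ = L * C0 * jb x ^ s := by ring
    · simp only [List.concat_eq_append]
      have hq1 : Dcy 0 (fun x => q * f x ^ (q - 1)) :=
        Dcy.const_mul (hsf.rpow hpos (q - 1)) (dcyT_dcy fun n => main n (q - 1)) q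
      have hprod : Dcy (0 + (s - 1)) (fun x => (q * f x ^ (q - 1)) * pd j f x) :=
        Dcy.mul (contDiff_const.mul (hsf.rpow hpos (q - 1))) (hsf.pd j) hq1 (hfd j)
      obtain ⟨C, hC⟩ := hprod β
      refine ⟨C, fun x => ?_⟩
      have hrw : pds (β ++ [j]) (fun x => f x ^ q - 1)
          = pds β (fun x => (q * f x ^ (q - 1)) * pd j f x) := by
        rw [pds_append_single, pd_sub_const, pd_rpow hsf hpos]
      rw [hrw]
      have := hC x
      rwa [show (0 + (s - 1) - β.length : ℝ) = s - (β ++ [j]).length by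
        rw [List.length_append, List.length_singleton]; push_cast; ring] at this

end Paper
namespace Paper

variable {d : ℕ}

lemma dcy_zero (s : ℝ) : Dcy (d := d) s (fun _ => (0:ℝ)) := by
  intro α
  obtain ⟨c', hc', hz⟩ := pds_const_aux α (0:ℝ)
  have : c' = 0 := by
    rcases List.eq_nil_or_concat α with rfl | ⟨β, j, rfl⟩
    · have := congrFun hc' 0; simpa [pds_nil] using this.symm
    · exact hz (by simp)
  refine ⟨0, fun x => ?_⟩
  rw [hc', this]
  simp

/-- "near constant t with decay rate s" -/
def Nr (s : ℝ) (t : ℝ) (f : (Fin d → ℝ) → ℝ) : Prop :=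
  Sm f ∧ Dcy s (fun x => f x - t)

lemma Nr.sm {s t f} (h : Nr (d := d) s t f) : Sm f := h.1

lemma Nr.dcy0 {s t f} (hs : s ≤ 0) (h : Nr (d := d) s t f) : Dcy 0 f := by
  have h1 : (fun x => f x) = fun x => (f x - t) + t := funext fun x => by ring
  have h2 : Dcy 0 (fun x => (f x - t) + t) :=
    Dcy.add (h.2.mono hs) ((dcy_const t).mono le_rfl) (h.1.sub contDiff_const) contDiff_const
  intro α
  obtain ⟨C, hC⟩ := h2 α
  refine ⟨C, fun x => ?_⟩
  have : pds α f = pds α (fun x => (f x - t) + t) := by rw [← h1]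
  rw [this]
  exact hC x

lemma nr_const (s : ℝ) (t : ℝ) : Nr (d := d) s t (fun _ => t) :=
  ⟨contDiff_const, by
    have : (fun _ : Fin d → ℝ => t - t) = fun _ => (0:ℝ) := funext fun _ => by ring
    rw [this]; exact dcy_zero s⟩

lemma Nr.add {s a b f g} (hf : Nr (d := d) s a f) (hg : Nr s b g) :
    Nr s (a + b) (fun x => f x + g x) := by
  refine ⟨hf.1.add hg.1, ?_⟩
  have h1 : (fun x => f x + g x - (a + b)) = fun x => (f x - a) + (g x - b) :=
    funext fun x => by ring
  rw [h1]
  exact Dcy.add hf.2 hg.2 (hf.1.sub contDiff_const) (hg.1.sub contDiff_const)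

lemma Nr.const_mul {s t f} (hf : Nr (d := d) s t f) (c : ℝ) :
    Nr s (c * t) (fun x => c * f x) := by
  refine ⟨contDiff_const.mul hf.1, ?_⟩
  have h1 : (fun x => c * f x - c * t) = fun x => c * (f x - t) := funext fun x => by ring
  rw [h1]
  exact Dcy.const_mul (hf.1.sub contDiff_const) hf.2 c

lemma Nr.mul {s a b f g} (hs : s ≤ 0) (hf : Nr (d := d) s a f) (hg : Nr s b g) :
    Nr s (a * b) (fun x => f x * g x) := by
  refine ⟨hf.1.mul hg.1, ?_⟩
  have h1 : (fun x => f x * g x - a * b)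
      = fun x => ((f x - a) * (g x - b) + (a * (g x - b) + b * (f x - a))) :=
    funext fun x => by ring
  rw [h1]
  have hsm1 : Sm (fun x => f x - a) := hf.1.sub contDiff_const
  have hsm2 : Sm (fun x => g x - b) := hg.1.sub contDiff_const
  have t1 : Dcy s (fun x => (f x - a) * (g x - b)) :=
    ((hf.2.mul (t := s) hsm1 hsm2 hg.2)).mono (by linarith)
  have t2 : Dcy s (fun x => a * (g x - b)) := Dcy.const_mul hsm2 hg.2 a
  have t3 : Dcy s (fun x => b * (f x - a)) := Dcy.const_mul hsm1 hf.2 b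
  exact Dcy.add t1 (Dcy.add t2 t3 (contDiff_const.mul hsm2) (contDiff_const.mul hsm1))
    (hsm1.mul hsm2) ((contDiff_const.mul hsm2).add (contDiff_const.mul hsm1))

lemma Nr.sum {s : ℝ} {ι : Type*} (u : Finset ι) (t : ι → ℝ) (f : ι → (Fin d → ℝ) → ℝ)
    (h : ∀ i ∈ u, Nr (d := d) s (t i) (f i)) :
    Nr s (∑ i ∈ u, t i) (fun x => ∑ i ∈ u, f i x) := by
  induction u using Finset.cons_induction with
  | empty => simpa using nr_const s 0
  | cons i u hiu ih =>
      simp only [Finset.sum_cons]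
      exact (h i (Finset.mem_cons_self i u)).add (ih fun j hj => h j (Finset.mem_cons_of_mem hj))

lemma Nr.prod {s : ℝ} (hs : s ≤ 0) {ι : Type*} (u : Finset ι) (t : ι → ℝ)
    (f : ι → (Fin d → ℝ) → ℝ) (h : ∀ i ∈ u, Nr (d := d) s (t i) (f i)) :
    Nr s (∏ i ∈ u, t i) (fun x => ∏ i ∈ u, f i x) := by
  induction u using Finset.cons_induction with
  | empty => simpa using nr_const s 1
  | cons i u hiu ih =>
      simp only [Finset.prod_cons]
      exact Nr.mul hs (h i (Finset.mem_cons_self i u))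
        (ih fun j hj => h j (Finset.mem_cons_of_mem hj))

lemma nr_det {s : ℝ} (hs : s ≤ 0) (A : (Fin d → ℝ) → Matrix (Fin d) (Fin d) ℝ)
    (T : Matrix (Fin d) (Fin d) ℝ) (h : ∀ i j, Nr (d := d) s (T i j) (fun x => A x i j)) :
    Nr s T.det (fun x => (A x).det) := by
  have hdet : ∀ (B : Matrix (Fin d) (Fin d) ℝ),
      B.det = ∑ σ : Equiv.Perm (Fin d), ((Equiv.Perm.sign σ : ℤ) : ℝ) * ∏ i, B (σ i) i := by
    intro B
    rw [Matrix.det_apply]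
    congr 1
    funext σ
    rw [Units.smul_def, zsmul_eq_mul]
  have h1 : (fun x => (A x).det)
      = fun x => ∑ σ : Equiv.Perm (Fin d), ((Equiv.Perm.sign σ : ℤ) : ℝ) * ∏ i, A x (σ i) i :=
    funext fun x => hdet (A x)
  rw [h1, hdet T]
  exact Nr.sum Finset.univ _ _ fun σ _ =>
    (Nr.prod hs Finset.univ _ _ fun i _ => h (σ i) i).const_mul _
end Paper
namespace Paper

variable {d : ℕ} {ρ : ℝ}

lemma norm_le_jb (x : Fin d → ℝ) : ‖x‖ ≤ jb x := by
  rw [pi_norm_le_iff_of_nonneg (jb_pos x).le]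
  intro i
  exact abs_coord_le_jb x i

def detg (M : MetricH1 d ρ) (x : Fin d → ℝ) : ℝ := (Matrix.of fun i j => M.g i j x).det

lemma nr_g (M : MetricH1 d ρ) (i j : Fin d) :
    Nr (-ρ) (if i = j then 1 else 0) (fun x => M.g i j x) := by
  refine ⟨M.smooth i j, ?_⟩
  intro α
  obtain ⟨C, _, hC⟩ := M.decay α i j
  refine ⟨C, fun x => ?_⟩
  have := hC x
  rwa [show (-(α.length:ℝ) - ρ) = -ρ - α.length by ring] at this

lemma nr_detg (M : MetricH1 d ρ) (hρ : 0 < ρ) : Nr (-ρ) 1 (detg M) := by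
  have h := nr_det (neg_nonpos.mpr hρ.le) (fun x => Matrix.of fun i j => M.g i j x)
    (1 : Matrix (Fin d) (Fin d) ℝ) (fun i j => by
      simpa [Matrix.one_apply] using nr_g M i j)
  exact (by simpa [Matrix.det_one] using h : Nr (-ρ) 1 fun x => (Matrix.of fun i j => M.g i j x).det)

lemma detg_pos (M : MetricH1 d ρ) (x : Fin d → ℝ) : 0 < detg M x := (M.posdef x).det_pos

lemma detg_lower (M : MetricH1 d ρ) (hρ : 0 < ρ) : ∃ c > 0, ∀ x, c ≤ detg M x := by
  obtain ⟨hsm, hdec⟩ := nr_detg M hρ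
  obtain ⟨C, hC⟩ := hdec []
  have hC' : ∀ x, |detg M x - 1| ≤ C * jb x ^ (-ρ) := by
    intro x
    have := hC x
    simpa [pds_nil] using this
  set R : ℝ := (max (2*C) 1) ^ (1/ρ) with hRdef
  have hmax0 : (0:ℝ) ≤ max (2*C) 1 := le_trans zero_le_one (le_max_right _ _)
  have hR1 : 1 ≤ R := Real.one_le_rpow (le_max_right _ _) (by positivity)
  have hRρ : max (2*C) 1 ≤ R ^ ρ := by
    rw [hRdef, ← Real.rpow_mul hmax0, one_div_mul_cancel hρ.ne', Real.rpow_one]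
  have hout : ∀ x : Fin d → ℝ, R ≤ jb x → 1/2 ≤ detg M x := by
    intro x hx
    have hjρ : 2*C ≤ jb x ^ ρ :=
      le_trans (le_trans (le_max_left _ _) hRρ)
        (Real.rpow_le_rpow (by linarith) hx hρ.le)
    have hpos : (0:ℝ) < jb x ^ ρ := Real.rpow_pos_of_pos (jb_pos x) ρ
    have h1 : C * jb x ^ (-ρ) ≤ 1/2 := by
      rw [Real.rpow_neg (jb_pos x).le]
      rw [mul_inv_le_iff₀ hpos]
      linarith
    have h2 := abs_le.mp (le_trans (hC' x) h1)
    linarith [h2.1]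
  obtain ⟨x₀, _, hx₀min⟩ := (isCompact_closedBall (0 : Fin d → ℝ) R).exists_isMinOn
    ⟨0, by simp [Metric.mem_closedBall]; linarith⟩ (hsm.continuous.continuousOn)
  refine ⟨min (detg M x₀) (1/2), lt_min (detg_pos M x₀) one_half_pos, fun x => ?_⟩
  rcases le_or_gt (‖x‖) R with h | h
  · refine le_trans (min_le_left _ _) (isMinOn_iff.mp hx₀min x ?_)
    simpa [Metric.mem_closedBall, dist_zero_right] using h
  · exact le_trans (min_le_right _ _) (hout x (le_trans h.le (norm_le_jb x)))

lemma nr_detgq (M : MetricH1 d ρ) (hρ : 0 < ρ) (q : ℝ) :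
    Nr (-ρ) 1 (fun x => detg M x ^ q) := by
  obtain ⟨c, hc, hlb⟩ := detg_lower M hρ
  obtain ⟨_, h1⟩ := dcy_rpow (nr_detg M hρ).1 hc hlb (neg_nonpos.mpr hρ.le) (nr_detg M hρ).2 q
  exact ⟨Sm.rpow (nr_detg M hρ).1 (fun x => detg_pos M x) q, h1⟩

lemma gd_eq (M : MetricH1 d ρ) : M.gd = fun x => detg M x ^ ((1:ℝ)/4) := rfl

lemma gd_pos (M : MetricH1 d ρ) (x : Fin d → ℝ) : 0 < M.gd x :=
  Real.rpow_pos_of_pos (detg_pos M x) _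

lemma gdinv_eq (M : MetricH1 d ρ) :
    (fun x => (M.gd x)⁻¹) = fun x => detg M x ^ (-((1:ℝ)/4)) := by
  funext x
  rw [gd_eq, Real.rpow_neg (detg_pos M x).le]

lemma gdsq_eq (M : MetricH1 d ρ) :
    (fun x => (M.gd x) ^ 2) = fun x => detg M x ^ ((1:ℝ)/2) := by
  funext x
  rw [gd_eq]
  rw [← Real.rpow_natCast (detg M x ^ ((1:ℝ)/4)) 2, ← Real.rpow_mul (detg_pos M x).le]
  norm_num

lemma nr_adj (M : MetricH1 d ρ) (hρ : 0 < ρ) (i j : Fin d) :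
    Nr (-ρ) ((1 : Matrix (Fin d) (Fin d) ℝ) i j)
      (fun x => (Matrix.of fun a b => M.g a b x).adjugate i j) := by
  have hrw : (fun x => (Matrix.of fun a b => M.g a b x).adjugate i j)
      = fun x => ((Matrix.of fun a b => M.g a b x).updateRow j (Pi.single i 1)).det :=
    funext fun x => Matrix.adjugate_apply _ _ _
  rw [hrw]
  have h := nr_det (neg_nonpos.mpr hρ.le)
    (fun x => (Matrix.of fun a b => M.g a b x).updateRow j (Pi.single i 1))
    ((1 : Matrix (Fin d) (Fin d) ℝ).updateRow j (Pi.single i 1)) ?_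
  · have hdet : ((1 : Matrix (Fin d) (Fin d) ℝ).updateRow j (Pi.single i 1)).det
        = (1 : Matrix (Fin d) (Fin d) ℝ) i j := by
      rw [← Matrix.adjugate_apply, Matrix.adjugate_one]
    rwa [hdet] at h
  · intro a b
    rcases eq_or_ne a j with rfl | hne
    · simp only [Matrix.updateRow_self]
      exact nr_const _ _
    · simp only [Matrix.updateRow_ne hne]
      simpa [Matrix.one_apply] using nr_g M a b

lemma ginv_apply (M : MetricH1 d ρ) (x : Fin d → ℝ) (i j : Fin d) :
    M.ginv x i j = (detg M x)⁻¹ * (Matrix.of fun a b => M.g a b x).adjugate i j := by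
  rw [MetricH1.ginv, Matrix.inv_def, Ring.inverse_eq_inv']
  simp [Matrix.smul_apply, smul_eq_mul, detg]

lemma nr_ginv (M : MetricH1 d ρ) (hρ : 0 < ρ) (i j : Fin d) :
    Nr (-ρ) ((1 : Matrix (Fin d) (Fin d) ℝ) i j) (fun x => M.ginv x i j) := by
  have h1 : Nr (-ρ) 1 (fun x => (detg M x)⁻¹) := by
    have := nr_detgq M hρ (-1)
    have hrw : (fun x => detg M x ^ (-1:ℝ)) = fun x => (detg M x)⁻¹ :=
      funext fun x => Real.rpow_neg_one _
    rwa [hrw] at this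
  have h2 := (h1.mul (neg_nonpos.mpr hρ.le) (nr_adj M hρ i j))
  have hrw : (fun x => (detg M x)⁻¹ * (Matrix.of fun a b => M.g a b x).adjugate i j)
      = fun x => M.ginv x i j := funext fun x => (ginv_apply M x i j).symm
  rw [hrw] at h2
  simpa using h2

end Paper
namespace Paper

variable {d : ℕ} {F : Type*} [NormedAddCommGroup F] [NormedSpace ℝ F]

/-- x·∇ for vector-valued functions -/
def Dop (v : (Fin d → ℝ) → F) : (Fin d → ℝ) → F := fun x => ∑ k, x k • pd k v x

/-- x·∇ for scalar functions -/
def Drs (f : (Fin d → ℝ) → ℝ) : (Fin d → ℝ) → ℝ := fun x => ∑ k, x k * pd k f x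

lemma Sm.coord_smul {v : (Fin d → ℝ) → F} (hv : Sm v) (k : Fin d) :
    Sm (fun x : Fin d → ℝ => x k • v x) :=
  (ContDiff.smul (contDiff_pi.mp contDiff_id k) hv)

lemma Sm.Dop {v : (Fin d → ℝ) → F} (hv : Sm v) : Sm (Paper.Dop v) :=
  ContDiff.sum fun k _ => (hv.pd k).coord_smul k

lemma Sm.Drs {f : (Fin d → ℝ) → ℝ} (hf : Sm f) : Sm (Paper.Drs f) :=
  ContDiff.sum fun k _ => (contDiff_pi.mp contDiff_id k).mul (hf.pd k)

lemma Sm.smul {f : (Fin d → ℝ) → ℝ} {v : (Fin d → ℝ) → F} (hf : Sm f) (hv : Sm v) :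
    Sm (fun x => f x • v x) := ContDiff.smul hf hv

lemma pd_smul_fun {f : (Fin d → ℝ) → ℝ} {v : (Fin d → ℝ) → F} (hf : Sm f) (hv : Sm v)
    (j : Fin d) :
    pd j (fun y => f y • v y) = fun x => pd j f x • v x + f x • pd j v x :=
  funext fun x => pd_smul (hf.diff x) (hv.diff x) j

lemma pd_coord_smul {v : (Fin d → ℝ) → F} (hv : Sm v) (j k : Fin d) :
    pd j (fun y => y k • v y) = fun x =>
      (if k = j then (1:ℝ) else 0) • v x + x k • pd j v x := by
  have h := pd_smul_fun (f := fun y => y k) (contDiff_pi.mp contDiff_id k) hv j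
  rw [h]
  funext x
  rw [pd_coord]

lemma Dop_smul {f : (Fin d → ℝ) → ℝ} {v : (Fin d → ℝ) → F} (hf : Sm f) (hv : Sm v) :
    Dop (fun y => f y • v y) = fun x => Drs f x • v x + f x • Dop v x := by
  funext x
  rw [Dop, Drs]
  have h1 : ∀ k : Fin d, pd k (fun y => f y • v y) x = pd k f x • v x + f x • pd k v x :=
    fun k => pd_smul (hf.diff x) (hv.diff x) k
  calc (∑ k, x k • pd k (fun y => f y • v y) x)
      = ∑ k, ((x k * pd k f x) • v x + x k • (f x • pd k v x)) := by
        apply Finset.sum_congr rfl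
        intro k _
        rw [h1 k, smul_add, smul_smul]
    _ = (∑ k, (x k * pd k f x)) • v x + f x • ∑ k, x k • pd k v x := by
        rw [Finset.sum_add_distrib, Finset.sum_smul, Finset.smul_sum]
        congr 1
        apply Finset.sum_congr rfl
        intro k _
        rw [smul_comm]
    _ = _ := by rw [Dop]

lemma pd_Dop {v : (Fin d → ℝ) → F} (hv : Sm v) (j : Fin d) :
    pd j (Dop v) = fun x => pd j v x + Dop (pd j v) x := by
  have h0 : Paper.Dop v = fun x => ∑ k, x k • pd k v x := rfl
  rw [h0, pd_sum Finset.univ _ (fun k _ => ((hv.pd k).coord_smul k).diff) j]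
  funext x
  have h1 : ∀ k : Fin d, pd j (fun y => y k • pd k v y) x
      = (if k = j then (1:ℝ) else 0) • pd k v x + x k • pd j (pd k v) x := by
    intro k
    rw [pd_coord_smul (hv.pd k) j k]
  rw [Finset.sum_congr rfl fun k _ => h1 k, Finset.sum_add_distrib]
  congr 1
  · rw [show (∑ k : Fin d, (if k = j then (1:ℝ) else 0) • pd k v x)
        = ∑ k : Fin d, (if k = j then pd k v x else 0) by
          apply Finset.sum_congr rfl; intro k _; split <;> simp]
    rw [Finset.sum_ite_eq' Finset.univ j (fun k => pd k v x)]
    simp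
  · rw [Dop]
    apply Finset.sum_congr rfl
    intro k _
    rw [pd_comm hv j k]

lemma Dop_add {v z : (Fin d → ℝ) → F} (hv : Differentiable ℝ v) (hz : Differentiable ℝ z) :
    Dop (fun y => v y + z y) = fun x => Dop v x + Dop z x := by
  funext x
  rw [Dop, Dop, Dop, ← Finset.sum_add_distrib]
  apply Finset.sum_congr rfl
  intro k _
  rw [pd_add hv hz]
  simp [smul_add]

lemma Dop_neg {v : (Fin d → ℝ) → F} :
    Dop (fun y => -(v y)) = fun x => -(Dop v x) := by
  funext x
  rw [Dop, Dop, ← Finset.sum_neg_distrib]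
  apply Finset.sum_congr rfl
  intro k _
  rw [pd_neg]
  simp

end Paper
namespace Paper

variable {d : ℕ} {ρ : ℝ} {F : Type*} [NormedAddCommGroup F] [NormedSpace ℝ F]

def hh (M : MetricH1 d ρ) : (Fin d → ℝ) → ℝ := fun x => (M.gd x)⁻¹

def Gc (M : MetricH1 d ρ) (i j : Fin d) : (Fin d → ℝ) → ℝ :=
  fun x => M.ginv x i j * M.gd x ^ 2

def NA (A : Fin d → Fin d → (Fin d → ℝ) → ℝ) (v : (Fin d → ℝ) → F) : (Fin d → ℝ) → F :=
  fun x => ∑ i, ∑ j, pd i (fun y => A i j y • pd j v y) x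

variable {M : MetricH1 d ρ}

lemma hh_eq (M : MetricH1 d ρ) : hh M = fun x => detg M x ^ (-((1:ℝ)/4)) := gdinv_eq M

lemma Sm_hh (hρ : 0 < ρ) : Sm (hh M) := by
  rw [hh_eq]; exact (nr_detgq M hρ _).sm

lemma hh_pos (x : Fin d → ℝ) : 0 < hh M x := inv_pos.mpr (gd_pos M x)

lemma gd_mul_hh (x : Fin d → ℝ) : M.gd x * hh M x = 1 :=
  mul_inv_cancel₀ (gd_pos M x).ne'

lemma hh_mul_gd (x : Fin d → ℝ) : hh M x * M.gd x = 1 :=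
  inv_mul_cancel₀ (gd_pos M x).ne'

lemma Sm_gd (hρ : 0 < ρ) : Sm (M.gd) := by
  rw [gd_eq]; exact (nr_detgq M hρ _).sm

lemma Gc_eq (M : MetricH1 d ρ) (i j : Fin d) :
    Gc M i j = fun x => M.ginv x i j * detg M x ^ ((1:ℝ)/2) := by
  funext x
  rw [Gc, congrFun (gdsq_eq M) x]

lemma Sm_Gc (hρ : 0 < ρ) (i j : Fin d) : Sm (Gc M i j) := by
  rw [Gc_eq]
  exact (nr_ginv M hρ i j).sm.mul (nr_detgq M hρ _).sm

lemma nr_Gc (hρ : 0 < ρ) (i j : Fin d) :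
    Nr (-ρ) ((1 : Matrix (Fin d) (Fin d) ℝ) i j) (Gc M i j) := by
  rw [Gc_eq]
  have := (nr_ginv M hρ i j).mul (neg_nonpos.mpr hρ.le) (nr_detgq M hρ ((1:ℝ)/2))
  simpa using this

def psi (M : MetricH1 d ρ) : (Fin d → ℝ) → ℝ := fun x => M.gd x * Drs (hh M) x

lemma Sm_psi (hρ : 0 < ρ) : Sm (psi M) := (Sm_gd hρ).mul (Sm_hh hρ).Drs

lemma Drs_hh_eq_hh_mul_psi (x : Fin d → ℝ) : Drs (hh M) x = hh M x * psi M x := by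
  rw [psi, ← mul_assoc, hh_mul_gd, one_mul]

/-- `Pop` in terms of `hh`, `Gc`, `NA`. -/
lemma pop_eq (M : MetricH1 d ρ) (v : (Fin d → ℝ) → F) :
    Pop M v = fun x => -(hh M x • NA (Gc M) (fun y => hh M y • v y) x) := by
  funext x
  rw [Pop, NA]
  congr 1
  rw [Finset.smul_sum]
  apply Finset.sum_congr rfl
  intro i _
  rw [Finset.smul_sum]
  rfl

lemma NA_congr {A : Fin d → Fin d → (Fin d → ℝ) → ℝ} {v z : (Fin d → ℝ) → F}
    (h : v = z) : NA A v = NA A z := by rw [h]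

lemma NA_add {A : Fin d → Fin d → (Fin d → ℝ) → ℝ} (hA : ∀ i j, Sm (A i j))
    {v z : (Fin d → ℝ) → F} (hv : Sm v) (hz : Sm z) :
    NA A (fun y => v y + z y) = fun x => NA A v x + NA A z x := by
  funext x
  rw [NA, NA, NA, ← Finset.sum_add_distrib]
  apply Finset.sum_congr rfl
  intro i _
  rw [← Finset.sum_add_distrib]
  apply Finset.sum_congr rfl
  intro j _
  have h1 : (fun y => A i j y • pd j (fun y' => v y' + z y') y)
      = fun y => (A i j y • pd j v y) + (A i j y • pd j z y) := by
    funext y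
    rw [pd_add hv.diff hz.diff]
    rw [smul_add]
  rw [h1, pd_add ((hA i j).smul (hv.pd j)).diff ((hA i j).smul (hz.pd j)).diff]

lemma NA_neg {A : Fin d → Fin d → (Fin d → ℝ) → ℝ} {v : (Fin d → ℝ) → F} :
    NA A (fun y => -(v y)) = fun x => -(NA A v x) := by
  funext x
  rw [NA, NA, ← Finset.sum_neg_distrib]
  apply Finset.sum_congr rfl
  intro i _
  rw [← Finset.sum_neg_distrib]
  apply Finset.sum_congr rfl
  intro j _
  have h1 : (fun y => A i j y • pd j (fun y' => -(v y')) y)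
      = fun y => -(A i j y • pd j v y) := by
    funext y
    rw [pd_neg, smul_neg]
  rw [h1, pd_neg]

lemma Dop_finsum {ι : Type*} (s : Finset ι) (Z : ι → (Fin d → ℝ) → F)
    (h : ∀ i ∈ s, Sm (Z i)) :
    Dop (fun y => ∑ i ∈ s, Z i y) = fun x => ∑ i ∈ s, Dop (Z i) x := by
  funext x
  rw [Dop]
  have h1 : ∀ k : Fin d, pd k (fun y => ∑ i ∈ s, Z i y) x = ∑ i ∈ s, pd k (Z i) x :=
    fun k => congrFun (pd_sum s Z (fun i hi => (h i hi).diff) k) x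
  calc (∑ k, x k • pd k (fun y => ∑ i ∈ s, Z i y) x)
      = ∑ k, ∑ i ∈ s, x k • pd k (Z i) x := by
        apply Finset.sum_congr rfl
        intro k _
        rw [h1 k, Finset.smul_sum]
    _ = ∑ i ∈ s, ∑ k, x k • pd k (Z i) x := Finset.sum_comm
    _ = _ := rfl

/-- commutator of `NA A` with dilations -/
lemma NA_Dop {A : Fin d → Fin d → (Fin d → ℝ) → ℝ} (hA : ∀ i j, Sm (A i j))
    {w : (Fin d → ℝ) → F} (hw : Sm w) :
    NA A (Dop w) = fun x => (NA A w x + NA A w x) + Dop (NA A w) x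
      - NA (fun i j => Drs (A i j)) w x := by
  funext x
  have key : ∀ i j : Fin d,
      pd i (fun y => A i j y • pd j (Dop w) y) x
        = (pd i (fun y => A i j y • pd j w y) x + pd i (fun y => A i j y • pd j w y) x)
          + Dop (pd i (fun y => A i j y • pd j w y)) x
          - pd i (fun y => Drs (A i j) y • pd j w y) x := by
    intro i j
    set z : (Fin d → ℝ) → F := fun y => A i j y • pd j w y with hz
    have hzsm : Sm z := (hA i j).smul (hw.pd j)
    have step1 : (fun y => A i j y • pd j (Dop w) y)
        = fun y => z y + (Dop z y + -(Drs (A i j) y • pd j w y)) := by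
      funext y
      rw [pd_Dop hw j]
      rw [smul_add]
      have h2 := congrFun (Dop_smul (hA i j) (hw.pd j)) y
      rw [hz]
      simp only []
      rw [show A i j y • Dop (pd j w) y = Dop z y - Drs (A i j) y • pd j w y by
        rw [h2]; abel]
      abel
    rw [step1]
    have hsm2 : Sm (Paper.Dop z) := hzsm.Dop
    have hsm3 : Sm (fun y => -(Drs (A i j) y • pd j w y)) := ((hA i j).Drs.smul (hw.pd j)).neg
    rw [pd_add hzsm.diff (Sm.diff (hsm2.add hsm3))]
    rw [pd_add hsm2.diff hsm3.diff]
    rw [pd_neg]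
    rw [pd_Dop hzsm i]
    simp only [hz]
    abel
  rw [NA]
  rw [Finset.sum_congr rfl fun i _ => Finset.sum_congr rfl fun j _ => key i j]
  have swap : Dop (NA A w) x
      = ∑ i, ∑ j, Dop (pd i (fun y => A i j y • pd j w y)) x := by
    have h0 : NA (F := F) A w = fun y => ∑ i, (fun y' => ∑ j, pd i (fun y'' => A i j y'' • pd j w y'') y') y := rfl
    rw [h0, Dop_finsum Finset.univ _ (fun i _ => ContDiff.sum fun j _ => ((hA i j).smul (hw.pd j)).pd i)]
    apply Finset.sum_congr rfl
    intro i _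
    rw [Dop_finsum Finset.univ _ (fun j _ => ((hA i j).smul (hw.pd j)).pd i)]
  rw [swap, NA, NA]
  simp only [Finset.sum_add_distrib, Finset.sum_sub_distrib]

end Paper
namespace Paper

variable {d : ℕ} {ρ : ℝ} {F : Type*} [NormedAddCommGroup F] [NormedSpace ℝ F]
variable {M : MetricH1 d ρ}

/-- S1 : `h • (Du) = D(h•u) - ψ•(h•u)` -/
lemma hDop_eq (hρ : 0 < ρ) {u : (Fin d → ℝ) → F} (hu : Sm u) :
    (fun y => hh M y • Dop u y)
      = fun y => Dop (fun t => hh M t • u t) y + -(psi M y • (hh M y • u y)) := by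
  funext y
  have h2 := congrFun (Dop_smul (Sm_hh (M := M) hρ) hu) y
  have h3 : Drs (hh M) y • u y = psi M y • (hh M y • u y) := by
    rw [Drs_hh_eq_hh_mul_psi, mul_comm, mul_smul, smul_smul, mul_comm, ← smul_smul]
  rw [h2, h3]
  abel

/-- coefficient family for the `ψ G` terms -/
def psiGc (M : MetricH1 d ρ) (i j : Fin d) : (Fin d → ℝ) → ℝ :=
  fun x => psi M x * Gc M i j x

def DGc (M : MetricH1 d ρ) (i j : Fin d) : (Fin d → ℝ) → ℝ := Drs (Gc M i j)

def betaE (M : MetricH1 d ρ) (i : Fin d) : (Fin d → ℝ) → ℝ :=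
  fun x => ∑ j, Gc M i j x * pd j (psi M) x

def gammaE (M : MetricH1 d ρ) (j : Fin d) : (Fin d → ℝ) → ℝ :=
  fun x => ∑ i, pd i (psi M) x * Gc M i j x

lemma Sm_psiGc (hρ : 0 < ρ) (i j : Fin d) : Sm (psiGc M i j) :=
  (Sm_psi hρ).mul (Sm_Gc hρ i j)

lemma Sm_DGc (hρ : 0 < ρ) (i j : Fin d) : Sm (DGc M i j) := (Sm_Gc hρ i j).Drs

lemma Sm_betaE (hρ : 0 < ρ) (i : Fin d) : Sm (betaE M i) :=
  ContDiff.sum fun j _ => (Sm_Gc hρ i j).mul ((Sm_psi hρ).pd j)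

lemma Sm_gammaE (hρ : 0 < ρ) (j : Fin d) : Sm (gammaE M j) :=
  ContDiff.sum fun i _ => ((Sm_psi hρ).pd i).mul (Sm_Gc hρ i j)

/-- S6 : expansion of `N(ψ • w)` -/
lemma NA_psi_smul (hρ : 0 < ρ) {w : (Fin d → ℝ) → F} (hw : Sm w) :
    NA (Gc M) (fun y => psi M y • w y)
      = fun x => (∑ i, pd i (fun y => betaE M i y • w y) x) + NA (psiGc M) w x := by
  funext x
  rw [NA, NA]
  rw [← Finset.sum_add_distrib]
  apply Finset.sum_congr rfl
  intro i _
  have key : ∀ j : Fin d,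
      pd i (fun y => Gc M i j y • pd j (fun t => psi M t • w t) y) x
        = pd i (fun y => (Gc M i j y * pd j (psi M) y) • w y) x
          + pd i (fun y => psiGc M i j y • pd j w y) x := by
    intro j
    have h1 : (fun y => Gc M i j y • pd j (fun t => psi M t • w t) y)
        = fun y => (Gc M i j y * pd j (psi M) y) • w y + psiGc M i j y • pd j w y := by
      funext y
      rw [pd_smul ((Sm_psi hρ).diff y) (hw.diff y) j, smul_add, smul_smul, smul_smul,
        psiGc, mul_comm (Gc M i j y) (psi M y)]
    rw [h1, pd_add (f := fun y => (Gc M i j y * pd j (psi M) y) • w y) (g := fun y => psiGc M i j y • pd j w y) (Sm.diff (((Sm_Gc (M := M) hρ i j).mul ((Sm_psi (M := M) hρ).pd j)).smul hw))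
      (Sm.diff ((Sm_psiGc (M := M) hρ i j).smul (hw.pd j)))]
  rw [Finset.sum_congr rfl fun j _ => key j, Finset.sum_add_distrib]
  congr 1
  have h2 : (fun y => betaE M i y • w y)
      = fun y => ∑ j, (Gc M i j y * pd j (psi M) y) • w y := by
    funext y
    rw [betaE, Finset.sum_smul]
  rw [h2, pd_sum Finset.univ (fun j y => (Gc M i j y * pd j (psi M) y) • w y)
    (fun j _ => Sm.diff (((Sm_Gc (M := M) hρ i j).mul ((Sm_psi (M := M) hρ).pd j)).smul hw)) i]

/-- S7 : `ψ • (N w) = N_{ψG} w - ∑ γ_j • ∂_j w` -/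
lemma psi_NA (hρ : 0 < ρ) {w : (Fin d → ℝ) → F} (hw : Sm w) :
    (fun x => psi M x • NA (Gc M) w x)
      = fun x => NA (psiGc M) w x + -(∑ j, gammaE M j x • pd j w x) := by
  funext x
  have key : ∀ i j : Fin d,
      psi M x • pd i (fun y => Gc M i j y • pd j w y) x
        = pd i (fun y => psiGc M i j y • pd j w y) x
          + -((pd i (psi M) x * Gc M i j x) • pd j w x) := by
    intro i j
    have h1 : (fun y => psiGc M i j y • pd j w y)
        = fun y => psi M y • (Gc M i j y • pd j w y) := by
      funext y
      rw [psiGc, mul_smul]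
    rw [h1, pd_smul ((Sm_psi hρ).diff x) (((Sm_Gc hρ i j).smul (hw.pd j)).diff x) i]
    rw [smul_smul]
    abel
  rw [show psi M x • NA (Gc M) w x = ∑ i, ∑ j, psi M x • pd i (fun y => Gc M i j y • pd j w y) x by
    rw [NA, Finset.smul_sum]
    exact Finset.sum_congr rfl fun i _ => Finset.smul_sum]
  rw [Finset.sum_congr rfl fun i _ => Finset.sum_congr rfl fun j _ => key i j]
  simp only [Finset.sum_add_distrib]
  simp only [NA]
  congr 1
  have h3 : ∀ j : Fin d, gammaE M j x • pd j w x
      = ∑ i, (pd i (psi M) x * Gc M i j x) • pd j w x := by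
    intro j
    rw [gammaE, Finset.sum_smul]
  rw [Finset.sum_comm, ← Finset.sum_neg_distrib]
  apply Finset.sum_congr rfl
  intro j _
  rw [h3 j]
  simp only [Finset.sum_neg_distrib]

/-- the core commutator identity -/
lemma core_identity (hρ : 0 < ρ) {u : (Fin d → ℝ) → F} (hu : Sm u) :
    (fun x => Pop M (Dop u) x - Dop (Pop M u) x)
      = fun x => (Pop M u x + Pop M u x)
        + hh M x • ((NA (DGc M) (fun y => hh M y • u y) x
            + (NA (psiGc M) (fun y => hh M y • u y) x + NA (psiGc M) (fun y => hh M y • u y) x))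
          + ((∑ i, pd i (fun y => betaE M i y • (fun t => hh M t • u t) y) x)
            + -(∑ j, gammaE M j x • pd j (fun t => hh M t • u t) x))) := by
  set w : (Fin d → ℝ) → F := fun y => hh M y • u y with hwdef
  have hw : Sm w := (Sm_hh hρ).smul hu
  have hGc : ∀ i j, Sm (Gc M i j) := Sm_Gc hρ
  have hNAw : Sm (NA (Gc M) w : (Fin d → ℝ) → F) := by
    have hrfl : NA (Gc M) w = fun x => ∑ i, ∑ j, pd i (fun y => Gc M i j y • pd j w y) x := rfl
    rw [hrfl]
    exact ContDiff.sum fun i _ => ContDiff.sum fun j _ => ((hGc i j).smul (hw.pd j)).pd i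
  -- Pop (Dop u)
  have e1 : Pop M (Dop u) = fun x => -(hh M x • NA (Gc M) (fun y => hh M y • Dop u y) x) :=
    pop_eq M (Dop u)
  have e2 : NA (Gc M) (fun y => hh M y • Dop u y)
      = fun x => NA (Gc M) (Dop w) x + -(NA (Gc M) (fun y => psi M y • w y) x) := by
    rw [NA_congr (hDop_eq hρ hu)]
    rw [NA_add hGc hw.Dop ((Sm_psi hρ).smul hw).neg]
    funext x
    rw [NA_neg]
  have e3 : NA (Gc M) (Dop w)
      = fun x => (NA (Gc M) w x + NA (Gc M) w x) + Dop (NA (Gc M) w) x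
        - NA (DGc M) w x := NA_Dop hGc hw
  have e4 : NA (Gc M) (fun y => psi M y • w y)
      = fun x => (∑ i, pd i (fun y => betaE M i y • w y) x) + NA (psiGc M) w x :=
    NA_psi_smul hρ hw
  -- Dop (Pop u)
  have e5 : Dop (Pop M u) = fun x => -(psi M x • (hh M x • NA (Gc M) w x)
      + hh M x • Dop (NA (Gc M) w) x) := by
    rw [pop_eq M u, ← hwdef]
    have h6 : (fun x => -(hh M x • NA (Gc M) w x))
        = fun x => -((fun y => hh M y • NA (Gc M) w y) x) := rfl
    rw [h6, Dop_neg]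
    funext x
    rw [congrFun (Dop_smul (Sm_hh (M := M) hρ) hNAw) x]
    congr 2
    rw [Drs_hh_eq_hh_mul_psi, mul_comm, mul_smul, smul_smul, mul_comm, ← smul_smul]
  have e7 := congrFun (psi_NA (M := M) hρ hw)
  -- combine
  funext x
  rw [congrFun e1 x, congrFun e5 x, congrFun e2 x, congrFun e3 x, congrFun e4 x]
  rw [show psi M x • (hh M x • NA (Gc M) w x) = hh M x • (psi M x • NA (Gc M) w x) by
    rw [smul_smul, smul_smul, mul_comm]]
  rw [e7 x]
  rw [show Pop M u x = -(hh M x • NA (Gc M) w x) from congrFun (pop_eq M u) x]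
  simp only [smul_add, smul_sub, smul_neg]
  abel

end Paper
namespace Paper

variable {d : ℕ} {ρ : ℝ} {M : MetricH1 d ρ}

lemma NA_csmul {A : Fin d → Fin d → (Fin d → ℝ) → ℝ} (hA : ∀ i j, Sm (A i j))
    {v : (Fin d → ℝ) → ℂ} (hv : Sm v) (c : ℂ) :
    NA A (fun y => c • v y) = fun x => c • NA A v x := by
  funext x
  rw [NA, NA, Finset.smul_sum]
  apply Finset.sum_congr rfl
  intro i _
  rw [Finset.smul_sum]
  apply Finset.sum_congr rfl
  intro j _
  have h1 : (fun y => A i j y • pd j (fun t => c • v t) y)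
      = fun y => c • (A i j y • pd j v y) := by
    funext y
    rw [congrFun (pd_const_smul hv.diff c j) y, smul_comm]
  rw [h1, pd_const_smul (Sm.diff ((hA i j).smul (hv.pd j))) c i]

lemma pop_add (hρ : 0 < ρ) {v z : (Fin d → ℝ) → ℂ} (hv : Sm v) (hz : Sm z) :
    Pop M (fun y => v y + z y) = fun x => Pop M v x + Pop M z x := by
  rw [pop_eq, pop_eq, pop_eq]
  funext x
  have h1 : (fun y => hh M y • (v y + z y))
      = fun y => hh M y • v y + hh M y • z y := by
    funext y; rw [smul_add]
  rw [h1, NA_add (Sm_Gc hρ) ((Sm_hh (M := M) hρ).smul hv) ((Sm_hh (M := M) hρ).smul hz)]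
  rw [smul_add, neg_add]

lemma pop_csmul (hρ : 0 < ρ) {v : (Fin d → ℝ) → ℂ} (hv : Sm v) (c : ℂ) :
    Pop M (fun y => c • v y) = fun x => c • Pop M v x := by
  rw [pop_eq, pop_eq]
  funext x
  have h1 : (fun y => hh M y • (c • v y)) = fun y => c • (hh M y • v y) := by
    funext y; rw [smul_comm]
  rw [h1, NA_csmul (Sm_Gc hρ) ((Sm_hh (M := M) hρ).smul hv) c]
  show -(hh M x • c • NA (Gc M) (fun y => hh M y • v y) x)
      = c • -(hh M x • NA (Gc M) (fun y => hh M y • v y) x)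
  rw [smul_comm (hh M x) c, smul_neg]

lemma A0_eq (u : (Fin d → ℝ) → ℂ) :
    A0 d u = fun x => (-Complex.I) • (Dop u x + ((d:ℂ)/2) • u x) := by
  funext x
  simp [A0, Dop, Complex.real_smul, smul_eq_mul]

end Paper
namespace Paper

variable {d : ℕ} {ρ : ℝ} {M : MetricH1 d ρ}

lemma Dcy.finsetSum {s : ℝ} {ι : Type*} (u : Finset ι) (f : ι → (Fin d → ℝ) → ℝ)
    (h : ∀ i ∈ u, Sm (f i) ∧ Dcy s (f i)) : Dcy s (fun x => ∑ i ∈ u, f i x) := by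
  induction u using Finset.cons_induction with
  | empty => simpa using dcy_zero s
  | cons i u hiu ih =>
      have hrw : (fun x => ∑ j ∈ Finset.cons i u hiu, f j x)
          = fun x => f i x + ∑ j ∈ u, f j x := by
        funext x; rw [Finset.sum_cons]
      rw [hrw]
      exact Dcy.add (h i (Finset.mem_cons_self i u)).2
        (ih fun j hj => h j (Finset.mem_cons_of_mem hj))
        (h i (Finset.mem_cons_self i u)).1
        (ContDiff.sum fun j hj => (h j (Finset.mem_cons_of_mem hj)).1)

lemma dcy_Drs {s t : ℝ} {f : (Fin d → ℝ) → ℝ} (hf : Sm f)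
    (hdec : Dcy s (fun x => f x - t)) : Dcy s (Drs f) := by
  have h1 : ∀ k : Fin d, Dcy (s - 1) (pd k f) := by
    intro k
    have := hdec.pdj k
    rwa [pd_sub_const] at this
  have h2 : Dcy s (fun x => ∑ k, x k * pd k f x) := by
    apply Dcy.finsetSum
    intro k _
    refine ⟨(contDiff_pi.mp contDiff_id k).mul (hf.pd k), ?_⟩
    have := Dcy.mul (t := s - 1) (contDiff_pi.mp contDiff_id k) (hf.pd k)
      (dcy_coord k) (h1 k)
    rwa [show (1 + (s - 1) : ℝ) = s by ring] at this
  exact h2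

lemma nr_hh (hρ : 0 < ρ) : Nr (-ρ) 1 (hh M) := by
  rw [hh_eq]; exact nr_detgq M hρ _

lemma nr_gd (hρ : 0 < ρ) : Nr (-ρ) 1 (M.gd) := by
  rw [gd_eq]; exact nr_detgq M hρ _

lemma dcy_psi (hρ : 0 < ρ) : Dcy (-ρ) (psi M) := by
  have h := Dcy.mul (s := 0) (t := -ρ) (Sm_gd (M := M) hρ) (Sm_hh (M := M) hρ).Drs
    ((nr_gd (M := M) hρ).dcy0 (neg_nonpos.mpr hρ.le))
    (dcy_Drs (Sm_hh (M := M) hρ) (nr_hh (M := M) hρ).2)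
  rw [show ((0:ℝ) + -ρ) = -ρ by ring] at h
  exact h

lemma dcy_Gc (hρ : 0 < ρ) (i j : Fin d) : Dcy 0 (Gc M i j) :=
  (nr_Gc (M := M) hρ i j).dcy0 (neg_nonpos.mpr hρ.le)

lemma dcy_DGc (hρ : 0 < ρ) (i j : Fin d) : Dcy (-ρ) (DGc M i j) :=
  dcy_Drs (Sm_Gc (M := M) hρ i j) (nr_Gc (M := M) hρ i j).2

lemma dcy_psiGc (hρ : 0 < ρ) (i j : Fin d) : Dcy (-ρ) (psiGc M i j) := by
  have h := Dcy.mul (s := -ρ) (t := 0) (Sm_psi (M := M) hρ) (Sm_Gc (M := M) hρ i j)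
    (dcy_psi (M := M) hρ) (dcy_Gc (M := M) hρ i j)
  rwa [show (-ρ + 0 : ℝ) = -ρ by ring] at h

lemma dcy_betaE (hρ : 0 < ρ) (i : Fin d) : Dcy (-ρ - 1) (betaE M i) := by
  apply Dcy.finsetSum
  intro j _
  refine ⟨(Sm_Gc (M := M) hρ i j).mul ((Sm_psi (M := M) hρ).pd j), ?_⟩
  have h := Dcy.mul (s := 0) (t := -ρ - 1) (Sm_Gc (M := M) hρ i j) ((Sm_psi (M := M) hρ).pd j)
    (dcy_Gc (M := M) hρ i j) ((dcy_psi (M := M) hρ).pdj j)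
  rwa [show ((0:ℝ) + (-ρ - 1)) = -ρ - 1 by ring] at h

lemma dcy_gammaE (hρ : 0 < ρ) (j : Fin d) : Dcy (-ρ - 1) (gammaE M j) := by
  apply Dcy.finsetSum
  intro i _
  refine ⟨((Sm_psi (M := M) hρ).pd i).mul (Sm_Gc (M := M) hρ i j), ?_⟩
  have h := Dcy.mul (s := -ρ - 1) (t := 0) ((Sm_psi (M := M) hρ).pd i) (Sm_Gc (M := M) hρ i j)
    ((dcy_psi (M := M) hρ).pdj i) (dcy_Gc (M := M) hρ i j)
  rwa [show ((-ρ - 1) + 0 : ℝ) = -ρ - 1 by ring] at h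

def acoef (M : MetricH1 d ρ) (i j : Fin d) : (Fin d → ℝ) → ℝ :=
  fun x => (-(1/2) : ℝ) * (DGc M i j x + (psiGc M i j x + psiGc M i j x))

def bcoef (M : MetricH1 d ρ) (i : Fin d) : (Fin d → ℝ) → ℝ :=
  fun x => (-(1/2) : ℝ) * (hh M x * betaE M i x)

def ccoef (M : MetricH1 d ρ) (j : Fin d) : (Fin d → ℝ) → ℝ :=
  fun x => (-(1/2) : ℝ) * (hh M x * gammaE M j x)

lemma dcy_to_rdecay {m : ℕ} {f : (Fin d → ℝ) → ℝ} (hsm : Sm f)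
    (h : Dcy (-ρ - m) f) : RDecay ρ m f := by
  refine ⟨hsm, fun α => ?_⟩
  obtain ⟨C, hC⟩ := h α
  refine ⟨C, fun x => ?_⟩
  have := hC x
  rwa [show (-ρ - (m:ℝ) - (α.length:ℝ)) = -ρ - m - α.length by ring] at this

lemma rdecay_acoef (hρ : 0 < ρ) (i j : Fin d) : RDecay ρ 0 (acoef M i j) := by
  have hsm : Sm (fun x => DGc M i j x + (psiGc M i j x + psiGc M i j x)) :=
    (Sm_DGc (M := M) hρ i j).add ((Sm_psiGc (M := M) hρ i j).add (Sm_psiGc (M := M) hρ i j))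
  have hd : Dcy (-ρ) (fun x => DGc M i j x + (psiGc M i j x + psiGc M i j x)) :=
    Dcy.add (dcy_DGc (M := M) hρ i j)
      (Dcy.add (dcy_psiGc (M := M) hρ i j) (dcy_psiGc (M := M) hρ i j) (Sm_psiGc (M := M) hρ i j) (Sm_psiGc (M := M) hρ i j))
      (Sm_DGc (M := M) hρ i j) ((Sm_psiGc (M := M) hρ i j).add (Sm_psiGc (M := M) hρ i j))
  apply dcy_to_rdecay (contDiff_const.mul hsm)
  have := Dcy.const_mul hsm hd (-(1/2))
  rwa [show (-ρ - (0:ℕ) : ℝ) = -ρ by norm_num]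

lemma rdecay_bcoef (hρ : 0 < ρ) (i : Fin d) : RDecay ρ 1 (bcoef M i) := by
  have hsm : Sm (fun x => hh M x * betaE M i x) := (Sm_hh (M := M) hρ).mul (Sm_betaE (M := M) hρ i)
  have hd : Dcy (-ρ - 1) (fun x => hh M x * betaE M i x) := by
    have h := Dcy.mul (s := 0) (t := -ρ - 1) (Sm_hh (M := M) hρ) (Sm_betaE (M := M) hρ i)
      ((nr_hh (M := M) hρ).dcy0 (neg_nonpos.mpr hρ.le)) (dcy_betaE (M := M) hρ i)
    rwa [show ((0:ℝ) + (-ρ - 1)) = -ρ - 1 by ring] at h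
  apply dcy_to_rdecay (contDiff_const.mul hsm)
  have := Dcy.const_mul hsm hd (-(1/2))
  rwa [show (-ρ - (1:ℕ) : ℝ) = -ρ - 1 by norm_num]

lemma rdecay_ccoef (hρ : 0 < ρ) (j : Fin d) : RDecay ρ 1 (ccoef M j) := by
  have hsm : Sm (fun x => hh M x * gammaE M j x) := (Sm_hh (M := M) hρ).mul (Sm_gammaE (M := M) hρ j)
  have hd : Dcy (-ρ - 1) (fun x => hh M x * gammaE M j x) := by
    have h := Dcy.mul (s := 0) (t := -ρ - 1) (Sm_hh (M := M) hρ) (Sm_gammaE (M := M) hρ j)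
      ((nr_hh (M := M) hρ).dcy0 (neg_nonpos.mpr hρ.le)) (dcy_gammaE (M := M) hρ j)
    rwa [show ((0:ℝ) + (-ρ - 1)) = -ρ - 1 by ring] at h
  apply dcy_to_rdecay (contDiff_const.mul hsm)
  have := Dcy.const_mul hsm hd (-(1/2))
  rwa [show (-ρ - (1:ℕ) : ℝ) = -ρ - 1 by norm_num]

end Paper
namespace Paper

variable {d : ℕ} {ρ : ℝ} {M : MetricH1 d ρ}

lemma rhs_a (hρ : 0 < ρ) {u : (Fin d → ℝ) → ℂ} (hu : Sm u) (x : Fin d → ℝ) :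
    (∑ j, ∑ k, dtilStar M j (fun y => acoef M j k y • dtil M k u y) x)
      = ((1/2 : ℝ)) • (hh M x • (NA (DGc M) (fun y => hh M y • u y) x
          + (NA (psiGc M) (fun y => hh M y • u y) x
            + NA (psiGc M) (fun y => hh M y • u y) x))) := by
  set w : (Fin d → ℝ) → ℂ := fun y => hh M y • u y with hwdef
  have hw : Sm w := (Sm_hh (M := M) hρ).smul hu
  have hkey : ∀ j k : Fin d, dtilStar M j (fun y => acoef M j k y • dtil M k u y) x
      = (1/2 : ℝ) • (hh M x • (pd j (fun y => DGc M j k y • pd k w y) x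
          + (pd j (fun y => psiGc M j k y • pd k w y) x
            + pd j (fun y => psiGc M j k y • pd k w y) x))) := by
    intro j k
    have h0 : dtilStar M j (fun y => acoef M j k y • dtil M k u y) x
        = -(hh M x • pd j (fun y => acoef M j k y • pd k w y) x) := rfl
    rw [h0]
    have h1 : (fun y => acoef M j k y • pd k w y)
        = fun y => (-(1/2):ℝ) • (DGc M j k y • pd k w y
            + (psiGc M j k y • pd k w y + psiGc M j k y • pd k w y)) := by
      funext y
      rw [acoef]
      rw [mul_smul, add_smul, add_smul]
    rw [h1]
    have hsm1 : Sm (fun y => DGc M j k y • pd k w y) := (Sm_DGc (M := M) hρ j k).smul (hw.pd k)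
    have hsm2 : Sm (fun y => psiGc M j k y • pd k w y) :=
      (Sm_psiGc (M := M) hρ j k).smul (hw.pd k)
    rw [pd_const_smul (Sm.diff (hsm1.add (hsm2.add hsm2))) (-(1/2):ℝ) j]
    rw [pd_add (Sm.diff hsm1) (Sm.diff (hsm2.add hsm2)), pd_add (Sm.diff hsm2) (Sm.diff hsm2)]
    rw [smul_comm (hh M x) (-(1/2):ℝ), ← neg_smul]
    norm_num
  rw [Finset.sum_congr rfl fun j _ => Finset.sum_congr rfl fun k _ => hkey j k]
  have hRHS : NA (DGc M) w x + (NA (psiGc M) w x + NA (psiGc M) w x)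
      = ∑ j, ∑ k, (pd j (fun y => DGc M j k y • pd k w y) x
        + (pd j (fun y => psiGc M j k y • pd k w y) x
          + pd j (fun y => psiGc M j k y • pd k w y) x)) := by
    simp only [NA, Finset.sum_add_distrib]
  rw [hRHS]
  simp only [Finset.smul_sum]

lemma rhs_b (hρ : 0 < ρ) {u : (Fin d → ℝ) → ℂ} (hu : Sm u) (x : Fin d → ℝ) :
    (∑ i, dtilStar M i (fun y => bcoef M i y • u y) x)
      = ((1/2 : ℝ)) • (hh M x • ∑ i, pd i (fun y => betaE M i y • (hh M y • u y)) x) := by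
  have hkey : ∀ i : Fin d, dtilStar M i (fun y => bcoef M i y • u y) x
      = (1/2 : ℝ) • (hh M x • pd i (fun y => betaE M i y • (hh M y • u y)) x) := by
    intro i
    have h0 : dtilStar M i (fun y => bcoef M i y • u y) x
        = -(hh M x • pd i (fun y => bcoef M i y • u y) x) := rfl
    rw [h0]
    have h1 : (fun y => bcoef M i y • u y)
        = fun y => (-(1/2):ℝ) • (betaE M i y • (hh M y • u y)) := by
      funext y
      rw [bcoef, mul_smul, mul_comm, mul_smul]
    rw [h1]
    have hsm1 : Sm (fun y => betaE M i y • (hh M y • u y)) :=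
      (Sm_betaE (M := M) hρ i).smul ((Sm_hh (M := M) hρ).smul hu)
    rw [pd_const_smul (Sm.diff hsm1) (-(1/2):ℝ) i]
    rw [smul_comm (hh M x) (-(1/2):ℝ), ← neg_smul]
    norm_num
  rw [Finset.sum_congr rfl fun i _ => hkey i]
  simp only [Finset.smul_sum]

lemma rhs_c (hρ : 0 < ρ) {u : (Fin d → ℝ) → ℂ} (hu : Sm u) (x : Fin d → ℝ) :
    (∑ j, ccoef M j x • dtil M j u x)
      = ((-(1/2) : ℝ)) • (hh M x • ∑ j, gammaE M j x •
          pd j (fun y => hh M y • u y) x) := by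
  have hkey : ∀ j : Fin d, ccoef M j x • dtil M j u x
      = (-(1/2) : ℝ) • (hh M x • (gammaE M j x • pd j (fun y => hh M y • u y) x)) := by
    intro j
    have h0 : dtil M j u x = pd j (fun y => hh M y • u y) x := rfl
    rw [h0, ccoef]
    rw [mul_smul, mul_smul]
  rw [Finset.sum_congr rfl fun j _ => hkey j]
  simp only [Finset.smul_sum]

end Paper
open Paper in
theorem stmt7 (d : ℕ) (hd : 3 ≤ d) (ρ : ℝ) (hρ : 0 < ρ) (M : MetricH1 d ρ) :
    ∃ a : Fin d → Fin d → (Fin d → ℝ) → ℝ,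
    ∃ b c : Fin d → (Fin d → ℝ) → ℝ,
      (∀ j k, RDecay ρ 0 (a j k)) ∧
      (∀ j, RDecay ρ 1 (b j)) ∧
      (∀ j, RDecay ρ 1 (c j)) ∧
      ∀ u : SchwartzMap (Fin d → ℝ) ℂ, ∀ x,
        Pop M (A0 d u) x - A0 d (Pop M u) x =
          -2 * Complex.I *
            (Pop M (⇑u) x +
              (∑ j, ∑ k, dtilStar M j (fun y => a j k y • dtil M k (⇑u) y) x) +
              (∑ j, dtilStar M j (fun y => b j y • u y) x) +
              (∑ j, c j x • dtil M j (⇑u) x)) := by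
  refine ⟨acoef M, bcoef M, ccoef M,
    (fun j k => rdecay_acoef hρ j k),
    (fun j => rdecay_bcoef hρ j),
    (fun j => rdecay_ccoef hρ j), ?_⟩
  intro u x
  have hu : Sm (⇑u) := u.smooth ⊤
  have hDop : Sm (Dop (⇑u)) := hu.Dop
  have hhalf : Sm (fun y => ((d:ℂ)/2) • (⇑u) y) := hu.const_smul ((d:ℂ)/2)
  have s1 : Pop M (A0 d ⇑u)
      = Pop M (fun y => (-Complex.I) • ((fun t => Dop (⇑u) t + ((d:ℂ)/2) • (⇑u) t) y)) :=
    congrArg (Pop M) (A0_eq (⇑u))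
  have s2 : Pop M (fun y => (-Complex.I) • ((fun t => Dop (⇑u) t + ((d:ℂ)/2) • (⇑u) t) y))
      = fun z => (-Complex.I) • Pop M (fun t => Dop (⇑u) t + ((d:ℂ)/2) • (⇑u) t) z :=
    pop_csmul hρ (hDop.add hhalf) (-Complex.I)
  have s3 : Pop M (fun t => Dop (⇑u) t + ((d:ℂ)/2) • (⇑u) t)
      = fun z => Pop M (Dop ⇑u) z + Pop M (fun t => ((d:ℂ)/2) • (⇑u) t) z :=
    pop_add hρ hDop hhalf
  have s4 : Pop M (fun t => ((d:ℂ)/2) • (⇑u) t) = fun z => ((d:ℂ)/2) • Pop M (⇑u) z :=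
    pop_csmul hρ hu _
  have l2 : A0 d (Pop M ⇑u) x
      = (-Complex.I) • (Dop (Pop M ⇑u) x + ((d:ℂ)/2) • Pop M (⇑u) x) :=
    congrFun (A0_eq (Pop M ⇑u)) x
  have hcore := congrFun (core_identity (M := M) hρ hu) x
  have hA := rhs_a (M := M) hρ hu x
  have hB := rhs_b (M := M) hρ hu x
  have hC := rhs_c (M := M) hρ hu x
  rw [congrFun (s1.trans s2) x, congrFun s3 x, congrFun s4 x, l2, hA, hB, hC]
  simp only [] at hcore
  simp only [Complex.real_smul, smul_eq_mul, Complex.ofReal_neg, Complex.ofReal_div,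
    Complex.ofReal_one, Complex.ofReal_ofNat] at hcore ⊢
  linear_combination (-Complex.I) * hcore
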